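/- Suppose ‖𝐯_{t+1} − ṽ_{t+1}‖ ≤ β₂‖𝐯_t − ṽ_t‖ + C(1−β₂)‖𝐬_t − s̃_t‖ for all t ≥ 1, where β₂ ∈ (0,1) and C > 0. Then for every T ≥ 1: ∑_{t=1}^T ‖𝐯_t − ṽ_t‖² ≤ (2/(1−β₂²))‖𝐯_1 − ṽ_1‖² + (4C²/ (1−β₂²)²)(1−β₂)² ∑_{t=1}^T ‖𝐬_t − s̃_t‖² ≤ (2/(1−β₂²))‖𝐯_1 − ṽ_1‖² + 4C² ∑_{t=1}^T ‖𝐬_t − s̃_t‖². -/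

import Mathlib

/-- Summed squared consensus error of the adaptive vector. -/
theorem stmt_12 (v s : ℕ → ℝ) (β₂ C : ℝ) (hβ₂ : 0 < β₂) (hβ₂' : β₂ < 1) (hC : 0 < C)
    (hv : ∀ t, 0 ≤ v t) (hs : ∀ t, 0 ≤ s t)
    (hrec : ∀ t ≥ 1, v (t + 1) ≤ β₂ * v t + C * (1 - β₂) * s t) :
    ∀ T ≥ 1,
      (∑ t ∈ Finset.Icc 1 T, (v t) ^ 2 ≤
          (2 / (1 - β₂ ^ 2)) * (v 1) ^ 2 +
            (4 * C ^ 2 / (1 - β₂ ^ 2) ^ 2) * (1 - β₂) ^ 2 * ∑ t ∈ Finset.Icc 1 T, (s t) ^ 2) ∧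
        ∑ t ∈ Finset.Icc 1 T, (v t) ^ 2 ≤
          (2 / (1 - β₂ ^ 2)) * (v 1) ^ 2 + 4 * C ^ 2 * ∑ t ∈ Finset.Icc 1 T, (s t) ^ 2 := by
  have hD : (0:ℝ) < 1 - β₂ ^ 2 := by nlinarith
  set D : ℝ := 1 - β₂ ^ 2 with hDdef
  set ρ : ℝ := (1 + β₂ ^ 2) / 2 with hρdef
  set K : ℝ := 2 * C ^ 2 * (1 - β₂) ^ 2 / D with hKdef
  have hKD : K * D = 2 * C ^ 2 * (1 - β₂) ^ 2 := by
    rw [hKdef]; exact div_mul_cancel₀ _ hD.ne'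
  have hpt : ∀ t ≥ 1, v (t + 1) ^ 2 ≤ ρ * v t ^ 2 + K * s t ^ 2 := by
    intro t ht
    have h1 := hrec t ht
    have hb : 0 ≤ β₂ * v t + C * (1 - β₂) * s t := by
      have h₁ := mul_nonneg hβ₂.le (hv t)
      have h₂ := mul_nonneg (mul_nonneg hC.le (by linarith : (0:ℝ) ≤ 1 - β₂)) (hs t)
      linarith
    have h2 : v (t + 1) ^ 2 ≤ (β₂ * v t + C * (1 - β₂) * s t) ^ 2 := by
      have := hv (t + 1); nlinarith
    have key : D * (β₂ * v t + C * (1 - β₂) * s t) ^ 2 ≤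
        D * (ρ * v t ^ 2) + (K * D) * s t ^ 2 := by
      rw [hKD, hρdef, hDdef]
      nlinarith [sq_nonneg ((1 - β₂ ^ 2) * v t - 2 * β₂ * C * (1 - β₂) * s t),
        sq_nonneg (v t), sq_nonneg (s t), sq_nonneg (C * (1 - β₂) * s t)]
    have key2 : (β₂ * v t + C * (1 - β₂) * s t) ^ 2 ≤ ρ * v t ^ 2 + K * s t ^ 2 := by
      have := mul_le_mul_of_nonneg_left key (le_of_lt (inv_pos.mpr hD))
      rw [mul_comm (K) (D)] at this
      calc (β₂ * v t + C * (1 - β₂) * s t) ^ 2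
          = D⁻¹ * (D * (β₂ * v t + C * (1 - β₂) * s t) ^ 2) := by field_simp
        _ ≤ D⁻¹ * (D * (ρ * v t ^ 2) + D * K * s t ^ 2) := this
        _ = ρ * v t ^ 2 + K * s t ^ 2 := by field_simp
    linarith
  -- summed shifted inequality
  have hsum : ∀ T ≥ 1, ∑ t ∈ Finset.Icc 2 (T + 1), v t ^ 2 ≤
      ρ * ∑ t ∈ Finset.Icc 1 T, v t ^ 2 + K * ∑ t ∈ Finset.Icc 1 T, s t ^ 2 := by
    intro T hT
    induction T, hT using Nat.le_induction with
    | base => simpa using hpt 1 le_rfl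
    | succ n hn ih =>
      rw [Finset.sum_Icc_succ_top (by omega : 2 ≤ n + 1 + 1),
        Finset.sum_Icc_succ_top (by omega : 1 ≤ n + 1),
        Finset.sum_Icc_succ_top (by omega : 1 ≤ n + 1)]
      have := hpt (n + 1) (by omega)
      nlinarith [this, ih]
  intro T hT
  have hsplit : ∑ t ∈ Finset.Icc 1 T, v t ^ 2 = v 1 ^ 2 + ∑ t ∈ Finset.Icc 2 T, v t ^ 2 := by
    have : Finset.Icc 1 T = insert 1 (Finset.Icc 2 T) := by
      ext x; simp [Finset.mem_Icc]; omega
    rw [this, Finset.sum_insert (by simp [Finset.mem_Icc])]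
  have hmono : ∑ t ∈ Finset.Icc 2 T, v t ^ 2 ≤ ∑ t ∈ Finset.Icc 2 (T + 1), v t ^ 2 :=
    Finset.sum_le_sum_of_subset_of_nonneg
      (Finset.Icc_subset_Icc_right (by omega)) (fun i _ _ => sq_nonneg _)
  have hS : ∑ t ∈ Finset.Icc 1 T, v t ^ 2 ≤
      v 1 ^ 2 + ρ * ∑ t ∈ Finset.Icc 1 T, v t ^ 2 + K * ∑ t ∈ Finset.Icc 1 T, s t ^ 2 := by
    have := hsum T hT
    linarith [hsplit, hmono, this]
  have hDρ : 1 - ρ = D / 2 := by rw [hρdef, hDdef]; ring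
  have hSfin : ∑ t ∈ Finset.Icc 1 T, v t ^ 2 ≤
      (2 / D) * v 1 ^ 2 + (4 * C ^ 2 / D ^ 2) * (1 - β₂) ^ 2 * ∑ t ∈ Finset.Icc 1 T, s t ^ 2 := by
    have h1 : (D / 2) * ∑ t ∈ Finset.Icc 1 T, v t ^ 2 ≤
        v 1 ^ 2 + K * ∑ t ∈ Finset.Icc 1 T, s t ^ 2 := by
      have e : D / 2 * ∑ t ∈ Finset.Icc 1 T, v t ^ 2 =
          (∑ t ∈ Finset.Icc 1 T, v t ^ 2) - ρ * ∑ t ∈ Finset.Icc 1 T, v t ^ 2 := by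
        rw [← hDρ]; ring
      linarith [hS, e]
    have hK2 : (4 * C ^ 2 / D ^ 2) * (1 - β₂) ^ 2 = (2 / D) * K := by
      rw [hKdef]; field_simp; ring
    rw [hK2]
    have h2 := mul_le_mul_of_nonneg_left h1 (le_of_lt (by positivity : (0:ℝ) < 2 / D))
    calc ∑ t ∈ Finset.Icc 1 T, v t ^ 2
        = (2 / D) * ((D / 2) * ∑ t ∈ Finset.Icc 1 T, v t ^ 2) := by field_simp
      _ ≤ (2 / D) * (v 1 ^ 2 + K * ∑ t ∈ Finset.Icc 1 T, s t ^ 2) := h2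
      _ = (2 / D) * v 1 ^ 2 + (2 / D) * K * ∑ t ∈ Finset.Icc 1 T, s t ^ 2 := by ring
  refine ⟨hSfin, ?_⟩
  have hcoef : (4 * C ^ 2 / D ^ 2) * (1 - β₂) ^ 2 ≤ 4 * C ^ 2 := by
    rw [hDdef]
    rw [div_mul_eq_mul_div, div_le_iff₀ (by positivity)]
    nlinarith [mul_nonneg (mul_nonneg (sq_nonneg (C * (1 - β₂))) hβ₂.le)
      (by linarith : (0:ℝ) ≤ 2 + β₂)]
  have hsnn : 0 ≤ ∑ t ∈ Finset.Icc 1 T, s t ^ 2 :=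
    Finset.sum_nonneg (fun i _ => sq_nonneg _)
  have hmul := mul_le_mul_of_nonneg_right hcoef hsnn
  linarith [hSfin, hmul]
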